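/- (Doob-type inequality under a concatenation-stable family of measures.) Let M be a nonnegative càdlàg process that is a submartingale under some Q̂ in a family Q of equivalent measures stable under concatenation. Then for every β ∈ (0,1): sup_{Q∈Q} E^Q[(sup_{0≤t≤T} M_t)^β] ≤ (1/(1-β)) · (sup_{Q∈Q} E^Q[M_T])^β. -/

import Mathlib

open MeasureTheory Filter Set ENNReal Topology

private lemma sfToReal_integrable {Ω : Type*} {m0 : MeasurableSpace Ω}
    (μ : Measure Ω) [IsFiniteMeasure μ] (ψ : SimpleFunc Ω ℝ≥0∞) :
    Integrable (fun ω => (ψ ω).toReal) μ := by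
  obtain ⟨C, hC⟩ := (ψ.map ENNReal.toReal).exists_forall_le
  refine Integrable.mono' (integrable_const C) ?_ (ae_of_all _ fun ω => ?_)
  · exact ((ψ.map ENNReal.toReal).stronglyMeasurable).aestronglyMeasurable
  · simpa [Real.norm_of_nonneg ENNReal.toReal_nonneg] using hC ω

private lemma simple_step {Ω : Type*} {m m0 : MeasurableSpace Ω} (hm : m ≤ m0)
    (μ ν Q' : Measure Ω) [IsFiniteMeasure μ] [SigmaFinite (μ.trim hm)]
    (hν : ν ≪ μ)
    (hQ' : ∀ A : Set Ω, MeasurableSet A →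
      Q' A = ∫⁻ ω, ENNReal.ofReal ((μ[A.indicator (fun _ => (1:ℝ))|m]) ω) ∂ν)
    (ψ : SimpleFunc Ω ℝ≥0∞) (hfin : ∀ ω, ψ ω ≠ ∞) :
    ∫⁻ ω, ENNReal.ofReal ((μ[fun ω => (ψ ω).toReal|m]) ω) ∂ν = ∫⁻ ω, ψ ω ∂Q' := by
  induction ψ using SimpleFunc.induction with
  | @const c s hs =>
    by_cases hc : c = ∞
    · -- then s must be empty
      have hsempty : s = ∅ := by
        by_contra hne
        obtain ⟨x, hx⟩ := Set.nonempty_iff_ne_empty.2 hne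
        have := hfin x
        simp [SimpleFunc.piecewise_apply, hx, hc] at this
      subst hsempty
      have hzero : (fun ω => ((SimpleFunc.piecewise ∅ hs (SimpleFunc.const Ω c)
          (SimpleFunc.const Ω 0)) ω).toReal) = (0 : Ω → ℝ) := by
        funext ω; simp [SimpleFunc.piecewise_apply]
      rw [hzero]
      have h0 : (μ[(0 : Ω → ℝ)|m]) = 0 := condExp_zero
      rw [h0]
      simp
    · have hcoe : ∀ ω, ((SimpleFunc.piecewise s hs (SimpleFunc.const Ω c)
          (SimpleFunc.const Ω 0)) ω) = s.indicator (fun _ => c) ω := by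
        intro ω
        by_cases hω : ω ∈ s <;> simp [SimpleFunc.piecewise_apply, hω]
      have htr : (fun ω => ((SimpleFunc.piecewise s hs (SimpleFunc.const Ω c)
          (SimpleFunc.const Ω 0)) ω).toReal)
          = (c.toReal • s.indicator (fun _ => (1:ℝ))) := by
        funext ω
        by_cases hω : ω ∈ s <;>
          simp [hcoe, Set.indicator_of_mem, Set.indicator_of_notMem, hω,
            SimpleFunc.piecewise_apply]
      rw [htr]
      have hcd : (μ[c.toReal • s.indicator (fun _ => (1:ℝ))|m])
          =ᵐ[μ] c.toReal • (μ[s.indicator (fun _ => (1:ℝ))|m]) := condExp_smul _ _ m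
      have hcdν : (μ[c.toReal • s.indicator (fun _ => (1:ℝ))|m])
          =ᵐ[ν] c.toReal • (μ[s.indicator (fun _ => (1:ℝ))|m]) := hcd.filter_mono hν.ae_le
      calc ∫⁻ ω, ENNReal.ofReal ((μ[c.toReal • s.indicator (fun _ => (1:ℝ))|m]) ω) ∂ν
          = ∫⁻ ω, c * ENNReal.ofReal ((μ[s.indicator (fun _ => (1:ℝ))|m]) ω) ∂ν := by
            refine lintegral_congr_ae (hcdν.mono fun ω hω => ?_)
            dsimp only
            rw [hω]
            simp only [Pi.smul_apply, smul_eq_mul]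
            rw [ENNReal.ofReal_mul ENNReal.toReal_nonneg, ENNReal.ofReal_toReal hc]
        _ = c * ∫⁻ ω, ENNReal.ofReal ((μ[s.indicator (fun _ => (1:ℝ))|m]) ω) ∂ν := by
            exact lintegral_const_mul c
              ((stronglyMeasurable_condExp.mono hm).measurable.ennreal_ofReal)
        _ = c * Q' s := by rw [hQ' s hs]
        _ = ∫⁻ ω, (SimpleFunc.piecewise s hs (SimpleFunc.const Ω c)
              (SimpleFunc.const Ω 0)) ω ∂Q' := by
            rw [show (fun ω => (SimpleFunc.piecewise s hs (SimpleFunc.const Ω c)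
              (SimpleFunc.const Ω 0)) ω) = s.indicator (fun _ => c) from funext hcoe]
            rw [lintegral_indicator_const hs]
  | @add f g hdisj hf hg =>
    have hffin : ∀ ω, f ω ≠ ∞ := fun ω =>
      ne_top_of_le_ne_top (hfin ω) (by simp [le_add_right (le_refl (f ω))])
    have hgfin : ∀ ω, g ω ≠ ∞ := fun ω =>
      ne_top_of_le_ne_top (hfin ω) (by simp [le_add_left (le_refl (g ω))])
    have hF := hf hffin
    have hG := hg hgfin
    have htr : (fun ω => (((f + g) : SimpleFunc Ω ℝ≥0∞) ω).toReal)
        = (fun ω => (f ω).toReal) + (fun ω => (g ω).toReal) := by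
      funext ω
      simp [ENNReal.toReal_add (hffin ω) (hgfin ω)]
    have hadd : (μ[(fun ω => (f ω).toReal) + (fun ω => (g ω).toReal)|m])
        =ᵐ[μ] (μ[fun ω => (f ω).toReal|m]) + (μ[fun ω => (g ω).toReal|m]) :=
      condExp_add (sfToReal_integrable μ f) (sfToReal_integrable μ g) m
    have hfn : 0 ≤ᵐ[μ] (μ[fun ω => (f ω).toReal|m]) :=
      condExp_nonneg (ae_of_all _ fun ω => ENNReal.toReal_nonneg)
    have hgn : 0 ≤ᵐ[μ] (μ[fun ω => (g ω).toReal|m]) :=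
      condExp_nonneg (ae_of_all _ fun ω => ENNReal.toReal_nonneg)
    have hptμ : ∀ᵐ ω ∂μ, ENNReal.ofReal ((μ[(fun ω => (f ω).toReal)
          + (fun ω => (g ω).toReal)|m]) ω)
        = ENNReal.ofReal ((μ[fun ω => (f ω).toReal|m]) ω)
          + ENNReal.ofReal ((μ[fun ω => (g ω).toReal|m]) ω) := by
      filter_upwards [hadd, hfn, hgn] with ω h1 h2 h3
      rw [h1, Pi.add_apply, ENNReal.ofReal_add h2 h3]
    have hptν := hptμ.filter_mono hν.ae_le
    rw [htr, lintegral_congr_ae hptν, lintegral_add_left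
      ((stronglyMeasurable_condExp.mono hm).measurable.ennreal_ofReal), hF, hG]
    have : (fun ω => ((f + g) : SimpleFunc Ω ℝ≥0∞) ω) = fun ω => f ω + g ω := by
      funext ω; simp
    rw [this, lintegral_add_left f.measurable]
private lemma lintegral_ofReal_condexp_le {Ω : Type*} {m m0 : MeasurableSpace Ω} (hm : m ≤ m0)
    (μ ν Q' : Measure Ω) [IsFiniteMeasure μ] [SigmaFinite (μ.trim hm)]
    (hν : ν ≪ μ)
    (f : Ω → ℝ) (hf_meas : Measurable f) (hf0 : ∀ ω, 0 ≤ f ω) (hf_int : Integrable f μ)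
    (hQ' : ∀ A : Set Ω, MeasurableSet A →
      Q' A = ∫⁻ ω, ENNReal.ofReal ((μ[A.indicator (fun _ => (1:ℝ))|m]) ω) ∂ν) :
    ∫⁻ ω, ENNReal.ofReal ((μ[f|m]) ω) ∂ν ≤ ∫⁻ ω, ENNReal.ofReal (f ω) ∂Q' := by
  classical
  set F : Ω → ℝ≥0∞ := fun ω => ENNReal.ofReal (f ω) with hF
  have hFmeas : Measurable F := hf_meas.ennreal_ofReal
  set r : ℕ → Ω → ℝ := fun n ω => ((SimpleFunc.eapprox F n) ω).toReal with hr
  have hr_eapp_le : ∀ n ω, (SimpleFunc.eapprox F n) ω ≤ F ω := by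
    intro n ω
    rw [← SimpleFunc.iSup_eapprox_apply hFmeas]
    exact le_iSup (fun n => (SimpleFunc.eapprox F n) ω) n
  have hr_le_f : ∀ n ω, r n ω ≤ f ω := by
    intro n ω
    have := ENNReal.toReal_mono (by simp [hF]) (hr_eapp_le n ω)
    rwa [ENNReal.toReal_ofReal (hf0 ω)] at this
  have hr0 : ∀ n ω, 0 ≤ r n ω := fun n ω => ENNReal.toReal_nonneg
  have hr_int : ∀ n, Integrable (r n) μ := fun n => sfToReal_integrable μ _
  have hr_mono : ∀ ω, Monotone fun n => r n ω := by
    intro ω a b hab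
    exact ENNReal.toReal_mono (SimpleFunc.eapprox_lt_top F b ω).ne
      (SimpleFunc.monotone_eapprox F hab ω)
  have hr_tend : ∀ ω, Tendsto (fun n => r n ω) atTop (𝓝 (f ω)) := by
    intro ω
    have h1 : Tendsto (fun n => (SimpleFunc.eapprox F n) ω) atTop (𝓝 (F ω)) := by
      rw [← SimpleFunc.iSup_eapprox_apply hFmeas]
      exact tendsto_atTop_iSup (fun a b hab => SimpleFunc.monotone_eapprox F hab ω)
    have h2 := (ENNReal.tendsto_toReal (by simp [hF] : F ω ≠ ∞)).comp h1
    rwa [show (F ω).toReal = f ω by simp [hF, ENNReal.toReal_ofReal (hf0 ω)]] at h2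
  set gc : ℕ → Ω → ℝ := fun n => μ[r n|m] with hgc
  set G : Ω → ℝ := μ[f|m] with hG
  have h_mono_ae : ∀ᵐ ω ∂μ, ∀ n, gc n ω ≤ gc (n + 1) ω :=
    ae_all_iff.2 fun n => condExp_mono (hr_int n) (hr_int (n + 1))
      (ae_of_all _ fun ω => hr_mono ω (Nat.le_succ n))
  have h_le_ae : ∀ᵐ ω ∂μ, ∀ n, gc n ω ≤ G ω :=
    ae_all_iff.2 fun n => condExp_mono (hr_int n) hf_int (ae_of_all _ (hr_le_f n))
  set gs : Ω → ℝ := fun ω => ⨆ n, gc n ω with hgs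
  have htend_gs : ∀ᵐ ω ∂μ, Tendsto (fun n => gc n ω) atTop (𝓝 (gs ω)) ∧ gs ω ≤ G ω ∧
      gc 0 ω ≤ gs ω := by
    filter_upwards [h_mono_ae, h_le_ae] with ω h1 h2
    have hmono : Monotone fun n => gc n ω := monotone_nat_of_le_succ h1
    have hbdd : BddAbove (range fun n => gc n ω) := by
      refine ⟨G ω, ?_⟩
      rintro x ⟨n, rfl⟩
      exact h2 n
    exact ⟨tendsto_atTop_ciSup hmono hbdd, ciSup_le h2, le_ciSup hbdd 0⟩
  have hgs_meas : AEStronglyMeasurable gs μ :=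
    aestronglyMeasurable_of_tendsto_ae atTop
      (fun n => (stronglyMeasurable_condExp.mono hm).aestronglyMeasurable)
      (htend_gs.mono fun ω h => h.1)
  have hGint : Integrable G μ := integrable_condExp
  have hg0int : Integrable (gc 0) μ := integrable_condExp
  have habs : ∀ᵐ ω ∂μ, ∀ n, ‖gc n ω‖ ≤ |gc 0 ω| + |G ω| := by
    filter_upwards [h_mono_ae, h_le_ae] with ω h1 h2
    intro n
    have hmono : Monotone fun n => gc n ω := monotone_nat_of_le_succ h1
    have h0n : gc 0 ω ≤ gc n ω := hmono (Nat.zero_le n)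
    rw [Real.norm_eq_abs, abs_le]
    constructor
    · nlinarith [neg_abs_le (gc 0 ω), abs_nonneg (G ω), h2 n]
    · nlinarith [le_abs_self (G ω), abs_nonneg (gc 0 ω), h2 n]
  have hgs_int : Integrable gs μ := by
    refine Integrable.mono' (hg0int.abs.add hGint.abs) hgs_meas ?_
    filter_upwards [htend_gs] with ω h
    rw [Real.norm_eq_abs, Pi.add_apply, abs_le]
    constructor
    · nlinarith [neg_abs_le (gc 0 ω), abs_nonneg (G ω), h.2.1, h.2.2]
    · nlinarith [le_abs_self (G ω), abs_nonneg (gc 0 ω), h.2.1, h.2.2]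
  have hint_tend1 : Tendsto (fun n => ∫ ω, gc n ω ∂μ) atTop (𝓝 (∫ ω, gs ω ∂μ)) := by
    refine tendsto_integral_of_dominated_convergence (fun ω => |gc 0 ω| + |G ω|)
      (fun n => (stronglyMeasurable_condExp.mono hm).aestronglyMeasurable)
      (hg0int.abs.add hGint.abs) ?_ (htend_gs.mono fun ω h => h.1)
    intro n
    filter_upwards [habs] with ω h using h n
  have hint_tend2 : Tendsto (fun n => ∫ ω, r n ω ∂μ) atTop (𝓝 (∫ ω, f ω ∂μ)) := by
    refine tendsto_integral_of_dominated_convergence f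
      (fun n => (hr_int n).aestronglyMeasurable) hf_int ?_ (ae_of_all _ hr_tend)
    intro n
    exact ae_of_all _ fun ω => by
      rw [Real.norm_of_nonneg (hr0 n ω)]; exact hr_le_f n ω
  have hieq : ∀ n, ∫ ω, gc n ω ∂μ = ∫ ω, r n ω ∂μ := fun n => integral_condExp hm
  have hGf : ∫ ω, G ω ∂μ = ∫ ω, f ω ∂μ := integral_condExp hm
  have hint_eq : ∫ ω, gs ω ∂μ = ∫ ω, G ω ∂μ := by
    have h2 : Tendsto (fun n => ∫ ω, gc n ω ∂μ) atTop (𝓝 (∫ ω, f ω ∂μ)) := by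
      simpa only [hieq] using hint_tend2
    rw [hGf]
    exact tendsto_nhds_unique hint_tend1 h2
  have hGgs : G =ᵐ[μ] gs := by
    have hnn : 0 ≤ᵐ[μ] fun ω => G ω - gs ω := by
      filter_upwards [htend_gs] with ω h
      simpa using h.2.1
    have hzero : ∫ ω, (G ω - gs ω) ∂μ = 0 := by
      rw [integral_sub hGint hgs_int, hint_eq, sub_self]
    have := (integral_eq_zero_iff_of_nonneg_ae hnn (hGint.sub hgs_int)).1 hzero
    filter_upwards [this] with ω h
    have : G ω - gs ω = 0 := h
    linarith
  have h_fin : ∀ᵐ ω ∂μ, Tendsto (fun n => gc n ω) atTop (𝓝 (G ω)) := by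
    filter_upwards [htend_gs, hGgs] with ω h1 h2
    exact h2 ▸ h1.1
  have h_ν : ∀ᵐ ω ∂ν, Tendsto (fun n => gc n ω) atTop (𝓝 (G ω)) := h_fin.filter_mono hν.ae_le
  have hstep : ∀ n, ∫⁻ ω, ENNReal.ofReal (gc n ω) ∂ν ≤ ∫⁻ ω, ENNReal.ofReal (f ω) ∂Q' := by
    intro n
    have heq := simple_step hm μ ν Q' hν hQ' (SimpleFunc.eapprox F n)
      (fun ω => (SimpleFunc.eapprox_lt_top F n ω).ne)
    calc ∫⁻ ω, ENNReal.ofReal (gc n ω) ∂ν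
        = ∫⁻ ω, (SimpleFunc.eapprox F n) ω ∂Q' := heq
      _ ≤ ∫⁻ ω, ENNReal.ofReal (f ω) ∂Q' := lintegral_mono fun ω => hr_eapp_le n ω
  calc ∫⁻ ω, ENNReal.ofReal (G ω) ∂ν
      = ∫⁻ ω, liminf (fun n => ENNReal.ofReal (gc n ω)) atTop ∂ν := by
        refine lintegral_congr_ae (h_ν.mono fun ω h => ?_)
        exact (((ENNReal.continuous_ofReal.tendsto _).comp h).liminf_eq).symm
    _ ≤ liminf (fun n => ∫⁻ ω, ENNReal.ofReal (gc n ω) ∂ν) atTop :=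
        lintegral_liminf_le fun n =>
          (stronglyMeasurable_condExp.mono hm).measurable.ennreal_ofReal
    _ ≤ ∫⁻ ω, ENNReal.ofReal (f ω) ∂Q' := by
        refine le_trans (liminf_le_liminf (Eventually.of_forall hstep)) ?_
        simp [liminf_const]
private lemma grid_bound {Ω : Type*} {m0 : MeasurableSpace Ω} (ℱ : Filtration ℝ m0) {T : ℝ}
    (Qhat Q : Measure Ω) [IsProbabilityMeasure Qhat] [IsProbabilityMeasure Q]
    (hQQhat : Q ≪ Qhat)
    {M : ℝ → Ω → ℝ} (hsub : Submartingale M ℱ Qhat) (hMpos : ∀ t ω, 0 ≤ M t ω)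
    (G : Finset ℝ) (hTG : T ∈ G) (hGIcc : ∀ s ∈ G, s ∈ Icc (0:ℝ) T)
    (a : ℝ) (ha : 0 < a) (C : ℝ≥0∞)
    (hcg : ∀ (τ : Ω → ℝ) (hτ : IsStoppingTime ℱ (fun ω => (τ ω : WithTop ℝ))), (∀ ω, τ ω ∈ Icc 0 T) →
      ∃ Q' : Measure Ω, (∫⁻ ω, ENNReal.ofReal (M T ω) ∂Q' ≤ C) ∧
        ∀ A : Set Ω, MeasurableSet A →
          Q' A = ∫⁻ ω, ENNReal.ofReal
            ((Qhat[A.indicator (fun _ => (1 : ℝ)) | hτ.measurableSpace]) ω) ∂Q) :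
    ENNReal.ofReal a * Q {ω | ∃ s ∈ G, a < M s ω} ≤ C := by
  classical
  set τ : Ω → ℝ := fun ω =>
    if h : (G.filter (fun s => a < M s ω)).Nonempty then (G.filter (fun s => a < M s ω)).min' h
    else T with hτdef
  have hτG : ∀ ω, τ ω ∈ G := by
    intro ω
    by_cases h : (G.filter fun s => a < M s ω).Nonempty
    · simp only [τ, dif_pos h]
      exact Finset.mem_of_mem_filter _ (Finset.min'_mem _ h)
    · simp only [τ, dif_neg h]; exact hTG
  have hτIcc : ∀ ω, τ ω ∈ Icc (0:ℝ) T := fun ω => hGIcc _ (hτG ω)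
  have hτleT : ∀ ω, τ ω ≤ T := fun ω => (hτIcc ω).2
  have hτle : ∀ t : ℝ, t < T →
      {ω | τ ω ≤ t} = ⋃ s ∈ G.filter (· ≤ t), {ω | a < M s ω} := by
    intro t htT
    ext ω
    simp only [mem_setOf_eq, mem_iUnion, Finset.mem_filter, exists_prop]
    constructor
    · intro h
      by_cases hne : (G.filter fun s => a < M s ω).Nonempty
      · have hmin := Finset.min'_mem _ hne
        rw [Finset.mem_filter] at hmin
        refine ⟨(G.filter fun s => a < M s ω).min' hne, ⟨hmin.1, ?_⟩, hmin.2⟩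
        simpa only [τ, dif_pos hne] using h
      · exfalso
        simp only [τ, dif_neg hne] at h
        exact absurd h (not_le.2 htT)
    · rintro ⟨s, ⟨hsG, hst⟩, hsM⟩
      have hmem : s ∈ G.filter (fun s => a < M s ω) := by
        rw [Finset.mem_filter]; exact ⟨hsG, hsM⟩
      have hne : (G.filter fun s => a < M s ω).Nonempty := ⟨s, hmem⟩
      simp only [τ, dif_pos hne]
      exact le_trans (Finset.min'_le _ s hmem) hst
  have hMsmeas : ∀ s : ℝ, MeasurableSet[ℱ s] {ω | a < M s ω} := fun s =>
    measurableSet_lt measurable_const (hsub.stronglyAdapted s).measurable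
  have hτst' : ∀ t : ℝ, MeasurableSet[ℱ t] {ω | τ ω ≤ t} := by
    intro t
    by_cases htT : T ≤ t
    · have : {ω | τ ω ≤ t} = univ := eq_univ_of_forall fun ω => le_trans (hτleT ω) htT
      rw [this]; exact MeasurableSet.univ
    · rw [hτle t (not_le.1 htT)]
      refine Finset.measurableSet_biUnion _ fun s hs => ?_
      rw [Finset.mem_filter] at hs
      exact ℱ.mono hs.2 _ (hMsmeas s)
  have hτst : IsStoppingTime ℱ (fun ω => (τ ω : WithTop ℝ)) := fun t => by
    simpa only [WithTop.coe_le_coe] using hτst' t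
  set A : Set Ω := {ω | (G.filter fun s => a < M s ω).Nonempty} with hAdef
  have hAeq : {ω | ∃ s ∈ G, a < M s ω} = A := by
    ext ω; simp [A, Finset.filter_nonempty_iff]
  have hAunion : A = ⋃ s ∈ G, {ω | a < M s ω} := by
    ext ω; simp [A, Finset.filter_nonempty_iff]
  have hAm0 : MeasurableSet A := by
    rw [hAunion]
    exact Finset.measurableSet_biUnion _ fun s _ => ℱ.le s _ (hMsmeas s)
  have hAmτ : MeasurableSet[hτst.measurableSpace] A := by
    rw [hτst.measurableSet]
    refine ⟨?_, fun t => ?_⟩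
    · rw [hAunion]
      exact Finset.measurableSet_biUnion _ fun s _ => (le_iSup (fun t => ℱ t) s) _ (hMsmeas s)
    simp only [WithTop.coe_le_coe]
    by_cases htT : T ≤ t
    · have hAt : A ∩ {ω | τ ω ≤ t} = A :=
        inter_eq_left.2 fun ω _ => le_trans (hτleT ω) htT
      rw [hAt, hAunion]
      refine Finset.measurableSet_biUnion _ fun s hs => ?_
      exact ℱ.mono (le_trans (hGIcc s hs).2 htT) _ (hMsmeas s)
    · have hsubA : {ω | τ ω ≤ t} ⊆ A := by
        intro ω h
        by_contra hA
        have hA' : ¬ (G.filter fun s => a < M s ω).Nonempty := hA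
        have hτω : τ ω = T := by simp only [τ]; exact dif_neg hA'
        have h' : τ ω ≤ t := h
        rw [hτω] at h'
        exact absurd h' htT
      rw [inter_eq_right.2 hsubA]
      exact hτst' t
  set V : Ω → ℝ := fun ω => M (τ ω) ω with hVdef
  have hτeqset : ∀ (B : Set Ω), (∀ u : ℝ, MeasurableSet[ℱ u] (B ∩ {ω | τ ω ≤ u})) →
      ∀ s ∈ G, MeasurableSet[ℱ s] (B ∩ {ω | τ ω = s}) := by
    intro B hB s hsG
    have hset : B ∩ {ω | τ ω = s} =
        (B ∩ {ω | τ ω ≤ s}) \ ⋃ s' ∈ G.filter (· < s), {ω | τ ω ≤ s'} := by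
      apply Set.eq_of_subset_of_subset
      · rintro ω ⟨hω, hτs⟩
        have hτs' : τ ω = s := hτs
        refine ⟨⟨hω, hτs'.le⟩, ?_⟩
        intro hmem
        rw [mem_iUnion₂] at hmem
        obtain ⟨s', hs', hle⟩ := hmem
        rw [Finset.mem_filter] at hs'
        have hles' : τ ω ≤ s' := hle
        rw [hτs'] at hles'
        exact absurd hles' (not_le.2 hs'.2)
      · rintro ω ⟨⟨hω, hτs⟩, hnot⟩
        have hτs' : τ ω ≤ s := hτs
        refine ⟨hω, ?_⟩
        rcases eq_or_lt_of_le hτs' with h | h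
        · exact h
        · exfalso
          apply hnot
          rw [mem_iUnion₂]
          exact ⟨τ ω, Finset.mem_filter.2 ⟨hτG ω, h⟩, show τ ω ≤ τ ω from le_refl _⟩
    rw [hset]
    refine MeasurableSet.diff (hB s)
      (Finset.measurableSet_biUnion _ fun s' hs' => ?_)
    rw [Finset.mem_filter] at hs'
    exact ℱ.mono hs'.2.le _ (hτst' s')
  have hVsum : V = fun ω => ∑ s ∈ G, Set.indicator {ω' | τ ω' = s} (M s) ω := by
    funext ω
    have h1 : ∑ s ∈ G, Set.indicator {ω' | τ ω' = s} (M s) ω = M (τ ω) ω := by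
      rw [Finset.sum_eq_single_of_mem (τ ω) (hτG ω)]
      · exact Set.indicator_of_mem (show ω ∈ {ω' | τ ω' = τ ω} from rfl) (M (τ ω))
      · intro s hs hne
        apply Set.indicator_of_notMem
        intro h
        exact hne ((show τ ω = s from h).symm)
    exact h1.symm
  have hτeqm0 : ∀ s ∈ G, MeasurableSet {ω | τ ω = s} := by
    intro s hs
    have := hτeqset univ (fun u => by rw [univ_inter]; exact hτst' u) s hs
    rw [univ_inter] at this
    exact ℱ.le s _ this
  have hVint : Integrable V Qhat := by
    rw [hVsum]
    exact integrable_finset_sum _ fun s hs => (hsub.integrable s).indicator (hτeqm0 s hs)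
  have hm : hτst.measurableSpace ≤ m0 := hτst.measurableSpace_le
  have hMTint : Integrable (M T) Qhat := hsub.integrable T
  have hsetle : ∀ B : Set Ω, MeasurableSet[hτst.measurableSpace] B →
      ∫ ω in B, V ω ∂Qhat ≤ ∫ ω in B, M T ω ∂Qhat := by
    intro B hB
    have hB' : ∀ u : ℝ, MeasurableSet[ℱ u] (B ∩ {ω | τ ω ≤ u}) := fun u => by
        simpa only [WithTop.coe_le_coe] using ((hτst.measurableSet B).1 hB).2 u
    have hBs : ∀ s ∈ G, MeasurableSet[ℱ s] (B ∩ {ω | τ ω = s}) := hτeqset B hB'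
    have hBm0 : ∀ s ∈ G, MeasurableSet (B ∩ {ω | τ ω = s}) := fun s hs => ℱ.le s _ (hBs s hs)
    have hBunion : B = ⋃ s ∈ G, (B ∩ {ω | τ ω = s}) := by
      ext ω
      simp only [mem_iUnion, mem_inter_iff, mem_setOf_eq, exists_prop]
      constructor
      · intro h; exact ⟨τ ω, hτG ω, h, rfl⟩
      · rintro ⟨s, _, h, _⟩; exact h
    have hdisj : (G : Set ℝ).Pairwise (Function.onFun Disjoint fun s => B ∩ {ω | τ ω = s}) := by
      intro s _ s' _ hne
      refine Set.disjoint_left.2 ?_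
      rintro ω ⟨_, h1⟩ ⟨_, h2⟩
      exact hne ((show τ ω = s from h1).symm.trans (show τ ω = s' from h2))
    calc ∫ ω in B, V ω ∂Qhat
        = ∑ s ∈ G, ∫ ω in B ∩ {ω | τ ω = s}, V ω ∂Qhat := by
          conv_lhs => rw [hBunion]
          exact integral_biUnion_finset G hBm0 hdisj fun s _ => hVint.integrableOn
      _ = ∑ s ∈ G, ∫ ω in B ∩ {ω | τ ω = s}, M s ω ∂Qhat := by
          refine Finset.sum_congr rfl fun s hs => ?_
          refine setIntegral_congr_fun (hBm0 s hs) fun ω hω => ?_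
          simp only [V]
          rw [(show τ ω = s from hω.2)]
      _ ≤ ∑ s ∈ G, ∫ ω in B ∩ {ω | τ ω = s}, M T ω ∂Qhat :=
          Finset.sum_le_sum fun s hs => hsub.setIntegral_le (hGIcc s hs).2 (hBs s hs)
      _ = ∫ ω in B, M T ω ∂Qhat := by
          conv_rhs => rw [hBunion]
          exact (integral_biUnion_finset G hBm0 hdisj fun s _ => hMTint.integrableOn).symm
  have hcond_nonneg : 0 ≤ᵐ[Qhat] (Qhat[M T - V|hτst.measurableSpace]) := by
    have htrim : 0 ≤ᵐ[Qhat.trim hm] (Qhat[M T - V|hτst.measurableSpace]) := by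
      refine ae_nonneg_of_forall_setIntegral_nonneg
        (integrable_condExp.trim hm stronglyMeasurable_condExp) ?_
      intro B hB _
      rw [← setIntegral_trim hm stronglyMeasurable_condExp hB,
        setIntegral_condExp hm (hMTint.sub hVint) hB]
      simp only [Pi.sub_apply]
      rw [integral_sub hMTint.integrableOn hVint.integrableOn]
      exact sub_nonneg.2 (hsetle B hB)
    exact ae_le_of_ae_le_trim htrim
  have hchain : (A.indicator (fun _ => a)) ≤ᵐ[Qhat] (Qhat[M T|hτst.measurableSpace]) := by
    have hindint : Integrable (A.indicator (fun _ => a)) Qhat :=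
      (integrable_const a).indicator (hm _ hAmτ)
    have h1 : (Qhat[A.indicator (fun _ => a)|hτst.measurableSpace]) = A.indicator (fun _ => a) :=
      condExp_of_stronglyMeasurable hm (stronglyMeasurable_const.indicator hAmτ) hindint
    have hptle : ∀ ω, A.indicator (fun _ => a) ω ≤ V ω := by
      intro ω
      by_cases hω : ω ∈ A
      · rw [Set.indicator_of_mem hω]
        have hne : (G.filter fun s => a < M s ω).Nonempty := hω
        have hmin := Finset.min'_mem _ hne
        rw [Finset.mem_filter] at hmin
        have : τ ω = (G.filter fun s => a < M s ω).min' hne := by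
          simp only [τ, dif_pos hne]
        simp only [V]
        rw [this]
        exact hmin.2.le
      · rw [Set.indicator_of_notMem hω]
        exact hMpos _ ω
    have h2 : (Qhat[A.indicator (fun _ => a)|hτst.measurableSpace])
        ≤ᵐ[Qhat] (Qhat[V|hτst.measurableSpace]) :=
      condExp_mono hindint hVint (ae_of_all _ hptle)
    have h3 : (Qhat[V|hτst.measurableSpace])
        ≤ᵐ[Qhat] (Qhat[M T|hτst.measurableSpace]) := by
      have hsubc := condExp_sub (m := hτst.measurableSpace) (μ := Qhat) hMTint hVint
      filter_upwards [hcond_nonneg, hsubc] with ω hω1 hω2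
      have h4 : (0:ℝ) ≤ (Qhat[M T|hτst.measurableSpace]) ω
          - (Qhat[V|hτst.measurableSpace]) ω := by
        have := hω2 ▸ hω1
        simpa using this
      linarith
    have := h2.trans h3
    rwa [h1] at this
  obtain ⟨Q', hQ'le, hQ'eq⟩ := hcg τ hτst hτIcc
  rw [hAeq]
  have hind : ENNReal.ofReal a * Q A
      = ∫⁻ ω, ENNReal.ofReal (A.indicator (fun _ => a) ω) ∂Q := by
    rw [show (fun ω => ENNReal.ofReal (A.indicator (fun _ => a) ω))
        = A.indicator (fun _ => ENNReal.ofReal a) from funext fun ω => by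
      by_cases h : ω ∈ A <;> simp [h]]
    rw [lintegral_indicator_const hAm0]
  rw [hind]
  calc ∫⁻ ω, ENNReal.ofReal (A.indicator (fun _ => a) ω) ∂Q
      ≤ ∫⁻ ω, ENNReal.ofReal ((Qhat[M T|hτst.measurableSpace]) ω) ∂Q :=
        lintegral_mono_ae ((hchain.filter_mono hQQhat.ae_le).mono
          fun ω h => ENNReal.ofReal_le_ofReal h)
    _ ≤ ∫⁻ ω, ENNReal.ofReal (M T ω) ∂Q' :=
        lintegral_ofReal_condexp_le hm Qhat Q Q' hQQhat (M T)
          ((hsub.stronglyAdapted T).mono (ℱ.le T)).measurable (fun ω => hMpos T ω) hMTint hQ'eq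
    _ ≤ C := hQ'le
/-- **Lemma 4.3 (supDoob).** Doob-type inequality under a concatenation-stable family of
equivalent measures: if the nonnegative càdlàg process `M` is a submartingale under some
`Q̂ ∈ 𝒬`, then for every `β ∈ (0,1)`,
`sup_{Q ∈ 𝒬} E^Q[(sup_{0≤t≤T} M_t)^β] ≤ (1/(1-β)) · (sup_{Q ∈ 𝒬} E^Q[M_T])^β`
(equivalently, with any upper bound `C` of `{E^Q[M_T] : Q ∈ 𝒬}` in place of the inner sup). -/
theorem supDoob_nonlinear
    {Ω : Type*} {m0 : MeasurableSpace Ω} (P : Measure Ω) [IsProbabilityMeasure P]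
    (ℱ : Filtration ℝ m0) (T : ℝ) (hT : 0 < T)
    (𝒬 : Set (Measure Ω))
    (hprob : ∀ Q ∈ 𝒬, IsProbabilityMeasure Q)
    (hequiv : ∀ Q ∈ 𝒬, Q ≪ P ∧ P ≪ Q)
    (Qhat : Measure Ω) (hQhat : Qhat ∈ 𝒬)
    (M : ℝ → Ω → ℝ) (hsub : Submartingale M ℱ Qhat)
    (hMpos : ∀ t ω, 0 ≤ M t ω)
    (hrc : ∀ ω t, ContinuousWithinAt (fun s => M s ω) (Ici t) t)
    (hll : ∀ ω t, ∃ l : ℝ, Tendsto (fun s => M s ω) (nhdsWithin t (Iio t)) (nhds l))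
    (hconcat : ∀ Q ∈ 𝒬, ∀ (τ : Ω → ℝ) (hτ : IsStoppingTime ℱ (fun ω => (τ ω : WithTop ℝ))),
      (∀ ω, τ ω ∈ Icc 0 T) →
      ∃ Q' ∈ 𝒬, ∀ A : Set Ω, MeasurableSet A →
        Q' A = ∫⁻ ω, ENNReal.ofReal
          ((Qhat[A.indicator (fun _ => (1 : ℝ)) | hτ.measurableSpace]) ω) ∂Q)
    (β : ℝ) (hβ : β ∈ Ioo (0 : ℝ) 1) :
    ∀ C : ℝ≥0∞, (∀ Q ∈ 𝒬, ∫⁻ ω, ENNReal.ofReal (M T ω) ∂Q ≤ C) →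
      ∀ Q ∈ 𝒬,
        ∫⁻ ω, ENNReal.ofReal ((⨆ t : Icc (0 : ℝ) T, M t ω) ^ β) ∂Q
          ≤ (ENNReal.ofReal (1 - β))⁻¹ * C ^ β := by
  classical
  intro C hC Q hQ
  haveI hPQ : IsProbabilityMeasure Q := hprob Q hQ
  haveI hPQh : IsProbabilityMeasure Qhat := hprob Qhat hQhat
  have hQQhat : Q ≪ Qhat := ((hequiv Q hQ).1).trans ((hequiv Qhat hQhat).2)
  have hβ0 : (0:ℝ) < β := hβ.1
  have hβ1 : β < 1 := hβ.2
  -- a dense sequence in [0, T] starting with T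
  obtain ⟨e, he⟩ := exists_surjective_nat ℚ
  set d : ℕ → ℝ := fun n => Nat.casesOn n T fun k =>
    max 0 (min T ((e k : ℚ) : ℝ)) with hd
  have hd0 : d 0 = T := rfl
  have hdmem : ∀ n, d n ∈ Icc (0:ℝ) T := by
    intro n
    cases n with
    | zero => exact ⟨hT.le, le_refl T⟩
    | succ k => exact ⟨le_max_left _ _, max_le hT.le (min_le_left _ _)⟩
  have hdrat : ∀ q : ℚ, 0 ≤ (q:ℝ) → (q:ℝ) ≤ T → ∃ n, d n = (q:ℝ) := by
    intro q h0 h1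
    obtain ⟨k, hk⟩ := he q
    refine ⟨k + 1, ?_⟩
    show max 0 (min T ((e k : ℚ) : ℝ)) = (q:ℝ)
    rw [hk, min_eq_right h1, max_eq_right h0]
  have hMs : ∀ t : ℝ, StronglyMeasurable (M t) := fun t => (hsub.stronglyAdapted t).mono (ℱ.le t)
  set N : Ω → ℝ≥0∞ := fun ω => ⨆ n, ENNReal.ofReal (M (d n) ω) with hN
  have hNmeas : Measurable N :=
    Measurable.iSup fun n => ((hMs (d n)).measurable).ennreal_ofReal
  -- the tail bound
  have tail : ∀ a : ℝ, 0 < a → ENNReal.ofReal a * Q {ω | ENNReal.ofReal a < N ω} ≤ C := by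
    intro a ha
    have key : ∀ k : ℕ, ENNReal.ofReal a * Q {ω | ∃ i ≤ k, a < M (d i) ω} ≤ C := by
      intro k
      set G : Finset ℝ := (Finset.range (k+1)).image d with hGdef
      have hTG : T ∈ G := Finset.mem_image.2 ⟨0, Finset.mem_range.2 (Nat.succ_pos k), hd0⟩
      have hGIcc : ∀ s ∈ G, s ∈ Icc (0:ℝ) T := by
        intro s hs
        obtain ⟨i, _, rfl⟩ := Finset.mem_image.1 hs
        exact hdmem i
      have hEA : {ω | ∃ i ≤ k, a < M (d i) ω} = {ω | ∃ s ∈ G, a < M s ω} := by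
        ext ω
        simp only [mem_setOf_eq]
        constructor
        · rintro ⟨i, hik, hi⟩
          exact ⟨d i, Finset.mem_image.2
            ⟨i, Finset.mem_range.2 (Nat.lt_succ_of_le hik), rfl⟩, hi⟩
        · rintro ⟨s, hsG, hs⟩
          obtain ⟨i, hik, rfl⟩ := Finset.mem_image.1 hsG
          exact ⟨i, Nat.lt_succ_iff.1 (Finset.mem_range.1 hik), hs⟩
      rw [hEA]
      refine grid_bound ℱ Qhat Q hQQhat hsub hMpos G hTG hGIcc a ha C ?_
      intro τ hτ hτIcc
      obtain ⟨Q', hQ'mem, hQ'eq⟩ := hconcat Q hQ τ hτ hτIcc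
      exact ⟨Q', hC Q' hQ'mem, hQ'eq⟩
    have hunion : {ω | ENNReal.ofReal a < N ω} = ⋃ k : ℕ, {ω | ∃ i ≤ k, a < M (d i) ω} := by
      ext ω
      simp only [mem_setOf_eq, mem_iUnion]
      constructor
      · intro h
        rw [hN, lt_iSup_iff] at h
        obtain ⟨n, hn⟩ := h
        exact ⟨n, n, le_refl n, (ENNReal.ofReal_lt_ofReal_iff_of_nonneg ha.le).1 hn⟩
      · rintro ⟨k, i, _, hi⟩
        have h1 : ENNReal.ofReal a < ENNReal.ofReal (M (d i) ω) :=
          (ENNReal.ofReal_lt_ofReal_iff_of_nonneg ha.le).2 hi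
        exact lt_of_lt_of_le h1 (le_iSup (fun n => ENNReal.ofReal (M (d n) ω)) i)
    rw [hunion]
    have hmono : Monotone fun k => {ω | ∃ i ≤ k, a < M (d i) ω} := by
      intro k1 k2 hk ω
      rintro ⟨i, hik, hi⟩
      exact ⟨i, le_trans hik hk, hi⟩
    rw [hmono.measure_iUnion, ENNReal.mul_iSup]
    exact iSup_le fun k => key k
  -- pointwise comparison of the supremum
  haveI hne : Nonempty (Icc (0:ℝ) T) := ⟨⟨0, le_refl 0, hT.le⟩⟩
  have claimA : ∀ ω, ENNReal.ofReal ((⨆ t : Icc (0 : ℝ) T, M t ω) ^ β) ≤ N ω ^ β := by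
    intro ω
    have hS0 : 0 ≤ ⨆ t : Icc (0:ℝ) T, M t ω := by
      by_cases hbdd : BddAbove (range fun t : Icc (0:ℝ) T => M t ω)
      · exact (hMpos 0 ω).trans (le_ciSup hbdd ⟨0, le_refl 0, hT.le⟩)
      · rw [Real.iSup_of_not_bddAbove hbdd]
    have hle : ENNReal.ofReal (⨆ t : Icc (0:ℝ) T, M t ω) ≤ N ω := by
      by_cases hbdd : BddAbove (range fun t : Icc (0:ℝ) T => M t ω)
      swap
      · rw [Real.iSup_of_not_bddAbove hbdd]
        simp
      rcases eq_or_ne (N ω) ⊤ with hNt | hNt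
      · rw [hNt]; exact le_top
      have hubn : ∀ n, M (d n) ω ≤ (N ω).toReal := by
        intro n
        have h1 : ENNReal.ofReal (M (d n) ω) ≤ N ω :=
          le_iSup (fun n => ENNReal.ofReal (M (d n) ω)) n
        have h2 := ENNReal.toReal_mono hNt h1
        rwa [ENNReal.toReal_ofReal (hMpos _ ω)] at h2
      have hub : ∀ t : Icc (0:ℝ) T, M t ω ≤ (N ω).toReal := by
        rintro ⟨t, ht0, htT⟩
        by_cases htT' : t = T
        · subst htT'
          simpa [hd0] using hubn 0
        have htlt : t < T := lt_of_le_of_ne htT htT'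
        have hch : ∀ j : ℕ, ∃ q : ℚ, t < (q:ℝ) ∧ (q:ℝ) < min T (t + 1/(j+1)) := by
          intro j
          refine exists_rat_btwn (lt_min htlt ?_)
          have : (0:ℝ) < 1/(j+1) := by positivity
          linarith
        choose u hu1 hu2 using hch
        have huT : ∀ j, (u j : ℝ) ≤ T := fun j =>
          le_of_lt (lt_of_lt_of_le (hu2 j) (min_le_left _ _))
        have hu0 : ∀ j, 0 ≤ (u j : ℝ) := fun j => le_of_lt (lt_of_le_of_lt ht0 (hu1 j))
        have hub' : ∀ j, M (u j) ω ≤ (N ω).toReal := by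
          intro j
          obtain ⟨n, hn⟩ := hdrat (u j) (hu0 j) (huT j)
          rw [← hn]
          exact hubn n
        have hulim : Tendsto (fun j : ℕ => (u j : ℝ)) atTop (𝓝 t) := by
          have h2 : Tendsto (fun j : ℕ => t + 1/((j:ℝ)+1)) atTop (𝓝 (t + 0)) :=
            tendsto_const_nhds.add tendsto_one_div_add_atTop_nhds_zero_nat
          rw [add_zero] at h2
          refine tendsto_of_tendsto_of_tendsto_of_le_of_le (g := fun _ => t)
            tendsto_const_nhds h2 (fun j => (hu1 j).le)
            (fun j => le_of_lt (lt_of_lt_of_le (hu2 j) (min_le_right _ _)))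
        have hMtend : Tendsto (fun j => M (u j) ω) atTop (𝓝 (M t ω)) := by
          have hin : Tendsto (fun j : ℕ => (u j : ℝ)) atTop (𝓝[Ici t] t) :=
            tendsto_nhdsWithin_of_tendsto_nhds_of_eventually_within _ hulim
              (Eventually.of_forall fun j => (hu1 j).le)
          exact (hrc ω t).tendsto.comp hin
        exact le_of_tendsto hMtend (Eventually.of_forall hub')
      have hS : (⨆ t : Icc (0:ℝ) T, M t ω) ≤ (N ω).toReal := ciSup_le hub
      calc ENNReal.ofReal (⨆ t : Icc (0:ℝ) T, M t ω)
          ≤ ENNReal.ofReal (N ω).toReal := ENNReal.ofReal_le_ofReal hS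
        _ = N ω := ENNReal.ofReal_toReal hNt
    rw [← ENNReal.ofReal_rpow_of_nonneg hS0 hβ0.le]
    exact ENNReal.rpow_le_rpow hle hβ0.le
  -- the calculus step
  have claimC : ∫⁻ ω, N ω ^ β ∂Q ≤ (ENNReal.ofReal (1 - β))⁻¹ * C ^ β := by
    rcases eq_or_ne C ⊤ with hCtop | hCtop
    · rw [hCtop, ENNReal.top_rpow_of_pos hβ0,
        ENNReal.mul_top (ENNReal.inv_ne_zero.2 ENNReal.ofReal_ne_top)]
      exact le_top
    rcases eq_or_ne C 0 with hC0 | hC0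
    · have hN0 : ∀ᵐ ω ∂Q, N ω = 0 := by
        have hss : {ω | N ω ≠ 0} ⊆ ⋃ n : ℕ, {ω | ENNReal.ofReal (1/((n:ℝ)+1)) < N ω} := by
          intro ω hω
          rcases eq_or_ne (N ω) ⊤ with h | h
          · refine mem_iUnion.2 ⟨0, ?_⟩
            simp only [mem_setOf_eq, h]
            exact ENNReal.ofReal_lt_top
          · have hpos : 0 < (N ω).toReal := ENNReal.toReal_pos hω h
            obtain ⟨n, hn⟩ := exists_nat_one_div_lt hpos
            exact mem_iUnion.2 ⟨n, (ENNReal.ofReal_lt_iff_lt_toReal (by positivity) h).2 hn⟩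
        have hz : Q {ω | N ω ≠ 0} = 0 := by
          refine measure_mono_null hss (measure_iUnion_null fun n => ?_)
          have h1 := tail (1/((n:ℝ)+1)) (by positivity)
          rw [hC0, le_zero_iff] at h1
          rcases mul_eq_zero.1 h1 with h | h
          · exact absurd h (ENNReal.ofReal_pos.2 (by positivity)).ne'
          · exact h
        rw [ae_iff]
        exact hz
      have hzero : ∀ᵐ ω ∂Q, N ω ^ β = 0 := hN0.mono fun ω h => by
        rw [h, ENNReal.zero_rpow_of_pos hβ0]
      rw [lintegral_congr_ae hzero, lintegral_zero]
      exact zero_le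
    -- main case : 0 < C < ∞
    set Ct : ℝ := C.toReal with hCtdef
    have hCt0 : 0 < Ct := ENNReal.toReal_pos hC0 hCtop
    have hNtop0 : Q {ω | N ω = ⊤} = 0 := by
      by_contra hpos0
      have hb : ∀ a : ℝ, 0 < a → ENNReal.ofReal a * Q {ω | N ω = ⊤} ≤ C := by
        intro a ha
        refine le_trans (mul_le_mul_right (measure_mono ?_) _) (tail a ha)
        intro ω h
        simp only [mem_setOf_eq] at h ⊢
        rw [h]
        exact ENNReal.ofReal_lt_top
      set x : ℝ≥0∞ := Q {ω | N ω = ⊤} with hx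
      have hxne : x ≠ 0 := hpos0
      have hdivne : C / x ≠ ⊤ := (ENNReal.div_lt_top hCtop hxne).ne
      have hle2 : ENNReal.ofReal ((C/x).toReal + 1) ≤ C / x := by
        rw [ENNReal.le_div_iff_mul_le (Or.inl hxne) (Or.inr hCtop)]
        exact hb _ (by positivity)
      rw [ENNReal.ofReal_add ENNReal.toReal_nonneg zero_le_one, ENNReal.ofReal_toReal hdivne,
        ENNReal.ofReal_one] at hle2
      exact absurd hle2 (by simpa using (ENNReal.lt_add_right hdivne one_ne_zero).not_ge)
    have hNfin : ∀ᵐ ω ∂Q, N ω ≠ ⊤ := by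
      rw [ae_iff]
      simpa using hNtop0
    set f : Ω → ℝ := fun ω => (N ω).toReal with hfdef
    have hfmeas : Measurable f := hNmeas.ennreal_toReal
    have hgmeas : Measurable fun ω => f ω ^ β := by
      have : (fun ω => f ω ^ β) = fun ω => (N ω ^ β).toReal := by
        funext ω
        exact ENNReal.toReal_rpow (N ω) β
      rw [this]
      exact (ENNReal.continuous_rpow_const.measurable.comp hNmeas).ennreal_toReal
    have hcong : ∫⁻ ω, N ω ^ β ∂Q = ∫⁻ ω, ENNReal.ofReal (f ω ^ β) ∂Q := by
      refine lintegral_congr_ae (hNfin.mono fun ω h => ?_)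
      show N ω ^ β = ENNReal.ofReal (f ω ^ β)
      have hf0ω : (0:ℝ) ≤ f ω := ENNReal.toReal_nonneg
      rw [← ENNReal.ofReal_rpow_of_nonneg hf0ω hβ0.le]
      exact congrArg (· ^ β) (ENNReal.ofReal_toReal h).symm
    rw [hcong]
    rw [lintegral_eq_lintegral_meas_lt Q
      (ae_of_all _ fun ω => Real.rpow_nonneg ENNReal.toReal_nonneg β) hgmeas.aemeasurable]
    set c : ℝ := Ct ^ β with hcdef
    have hc0 : 0 < c := Real.rpow_pos_of_pos hCt0 β
    have hβinv : 1 < β⁻¹ := (one_lt_inv₀ hβ0).2 hβ1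
    have hrlt : -β⁻¹ < -1 := neg_lt_neg hβinv
    have htb : ∀ t : ℝ, t ∈ Ioi c → Q {ω | t < f ω ^ β} ≤ C * ENNReal.ofReal (t ^ (-β⁻¹)) := by
      intro t ht
      have ht0 : 0 < t := lt_trans hc0 ht
      have hb0 : 0 < t ^ β⁻¹ := Real.rpow_pos_of_pos ht0 _
      have hss : {ω | t < f ω ^ β} ⊆ {ω | ENNReal.ofReal (t ^ β⁻¹) < N ω} ∪ {ω | N ω = ⊤} := by
        intro ω hω
        rcases eq_or_ne (N ω) ⊤ with h | h
        · exact Or.inr h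
        · refine Or.inl ?_
          have h1 : t ^ β⁻¹ < (f ω ^ β) ^ β⁻¹ :=
            Real.rpow_lt_rpow ht0.le hω (inv_pos.2 hβ0)
          rw [← Real.rpow_mul ENNReal.toReal_nonneg, mul_inv_cancel₀ hβ0.ne',
            Real.rpow_one] at h1
          exact (ENNReal.ofReal_lt_iff_lt_toReal hb0.le h).2 h1
      calc Q {ω | t < f ω ^ β}
          ≤ Q ({ω | ENNReal.ofReal (t ^ β⁻¹) < N ω} ∪ {ω | N ω = ⊤}) := measure_mono hss
        _ ≤ Q {ω | ENNReal.ofReal (t ^ β⁻¹) < N ω} + Q {ω | N ω = ⊤} := measure_union_le _ _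
        _ = Q {ω | ENNReal.ofReal (t ^ β⁻¹) < N ω} := by rw [hNtop0, add_zero]
        _ ≤ C / ENNReal.ofReal (t ^ β⁻¹) := by
            rw [ENNReal.le_div_iff_mul_le (Or.inl (ENNReal.ofReal_pos.2 hb0).ne')
              (Or.inl ENNReal.ofReal_ne_top)]
            rw [mul_comm]
            exact tail _ hb0
        _ = C * ENNReal.ofReal (t ^ (-β⁻¹)) := by
            rw [div_eq_mul_inv, Real.rpow_neg ht0.le, ENNReal.ofReal_inv_of_pos hb0]
    have hsplitset : Ioi (0:ℝ) = Ioc 0 c ∪ Ioi c := (Ioc_union_Ioi_eq_Ioi hc0.le).symm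
    rw [hsplitset, lintegral_union measurableSet_Ioi Ioc_disjoint_Ioi_same]
    have hpiece1 : ∫⁻ t in Ioc (0:ℝ) c, Q {ω | t < f ω ^ β} ≤ ENNReal.ofReal c := by
      calc ∫⁻ t in Ioc (0:ℝ) c, Q {ω | t < f ω ^ β}
          ≤ ∫⁻ _ in Ioc (0:ℝ) c, 1 :=
            setLIntegral_mono' measurableSet_Ioc fun t _ => prob_le_one
        _ = ENNReal.ofReal c := by rw [setLIntegral_one, Real.volume_Ioc, sub_zero]
    have hpiece2 : ∫⁻ t in Ioi c, Q {ω | t < f ω ^ β}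
        ≤ C * ENNReal.ofReal (-c ^ (-β⁻¹ + 1) / (-β⁻¹ + 1)) := by
      calc ∫⁻ t in Ioi c, Q {ω | t < f ω ^ β}
          ≤ ∫⁻ t in Ioi c, C * ENNReal.ofReal (t ^ (-β⁻¹)) :=
            setLIntegral_mono' measurableSet_Ioi htb
        _ = C * ∫⁻ t in Ioi c, ENNReal.ofReal (t ^ (-β⁻¹)) :=
            lintegral_const_mul' C _ hCtop
        _ = C * ENNReal.ofReal (∫ t in Ioi c, t ^ (-β⁻¹)) := by
            rw [← ofReal_integral_eq_lintegral_ofReal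
              (integrableOn_Ioi_rpow_of_lt hrlt hc0)
              ((ae_restrict_iff' measurableSet_Ioi).2 (ae_of_all _ fun t ht =>
                Real.rpow_nonneg (le_of_lt (lt_trans hc0 ht)) _))]
        _ = C * ENNReal.ofReal (-c ^ (-β⁻¹ + 1) / (-β⁻¹ + 1)) := by
            rw [integral_Ioi_rpow_of_lt hrlt hc0]
    refine le_trans (add_le_add hpiece1 hpiece2) (le_of_eq ?_)
    -- final real computation
    have hb1ne : β - 1 ≠ 0 := sub_ne_zero.2 hβ1.ne
    have h1mb : (0:ℝ) < 1 - β := by linarith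
    have hKey : Ct * (-c ^ (-β⁻¹ + 1) / (-β⁻¹ + 1)) = c * (β / (1 - β)) := by
      have hb1 : -β⁻¹ + 1 = (β - 1)/β := by field_simp; ring
      have hcrw : c ^ ((β-1)/β) = Ct ^ (β-1) := by
        rw [hcdef, ← Real.rpow_mul hCt0.le]
        congr 1
        field_simp
      rw [hb1, hcrw]
      have hCtpow : Ct * Ct ^ (β - 1) = c := by
        nth_rewrite 1 [show Ct = Ct ^ (1:ℝ) from (Real.rpow_one Ct).symm]
        rw [← Real.rpow_add hCt0]
        rw [hcdef]
        congr 1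
        ring
      field_simp
      rw [hCtpow]
      ring
    have hCof : C = ENNReal.ofReal Ct := (ENNReal.ofReal_toReal hCtop).symm
    have hKnn : 0 ≤ c * (β / (1 - β)) := by positivity
    calc ENNReal.ofReal c + C * ENNReal.ofReal (-c ^ (-β⁻¹ + 1) / (-β⁻¹ + 1))
        = ENNReal.ofReal c + ENNReal.ofReal (Ct * (-c ^ (-β⁻¹ + 1) / (-β⁻¹ + 1))) := by
          rw [hCof, ← ENNReal.ofReal_mul hCt0.le]
      _ = ENNReal.ofReal c + ENNReal.ofReal (c * (β / (1 - β))) := by rw [hKey]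
      _ = ENNReal.ofReal (c + c * (β / (1 - β))) := by
          rw [← ENNReal.ofReal_add hc0.le hKnn]
      _ = ENNReal.ofReal ((1 - β)⁻¹ * c) := by
          congr 1
          field_simp
          ring
      _ = (ENNReal.ofReal (1 - β))⁻¹ * C ^ β := by
          rw [hCof, ENNReal.ofReal_rpow_of_pos hCt0, ← hcdef,
            ← ENNReal.ofReal_inv_of_pos h1mb,
            ← ENNReal.ofReal_mul (by positivity : (0:ℝ) ≤ (1-β)⁻¹)]
  exact le_trans (lintegral_mono claimA) claimC
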